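/- For every even dimension d ≥ 2 and every real r with 0 ≤ r ≤ √((d−2)/2), there exists a d×d complex density matrix ρ with S_R(ρ) = r and S_I(ρ)² = 1 + r² (i.e., ρ saturates the quadratic bound S_I² ≤ 1 + S_R²). -/

import Mathlib

open Matrix
open scoped ComplexOrder

noncomputable section

/-- A density matrix: positive semidefinite with unit trace. -/
def IsDensityMatrix {d : ℕ} (ρ : Matrix (Fin d) (Fin d) ℂ) : Prop :=
  ρ.PosSemidef ∧ ρ.trace = 1

/-- The real part `R = (d/2)(ρ + ρᵀ)`. -/
def Rpart (d : ℕ) (ρ : Matrix (Fin d) (Fin d) ℂ) : Matrix (Fin d) (Fin d) ℂ :=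
  ((d : ℂ) / 2) • (ρ + ρ.transpose)

/-- The imaginary part `I = (d/2)(ρ − ρᵀ)`. -/
def Ipart (d : ℕ) (ρ : Matrix (Fin d) (Fin d) ℂ) : Matrix (Fin d) (Fin d) ℂ :=
  ((d : ℂ) / 2) • (ρ - ρ.transpose)

/-- `S_R = √(Tr(R²)/d − 1)`. -/
def SR (d : ℕ) (ρ : Matrix (Fin d) (Fin d) ℂ) : ℝ :=
  Real.sqrt ((Rpart d ρ * Rpart d ρ).trace.re / d - 1)

/-- `S_I = √(Tr(I²)/d)`. -/
def SI (d : ℕ) (ρ : Matrix (Fin d) (Fin d) ℂ) : ℝ :=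
  Real.sqrt ((Ipart d ρ * Ipart d ρ).trace.re / d)

/-- For every even dimension `d ≥ 2` and every `0 ≤ r ≤ √((d−2)/2)`,
there is a `d×d` density matrix with `S_R = r` and `S_I² = 1 + r²`. -/
def cfun (α β : ℝ) (i : ℕ) : ℝ := if i < 2 then α else β

def Bmat (d : ℕ) (α β : ℝ) : Matrix (Fin d) (Fin d) ℂ := Matrix.of fun i j =>
  if Even i.1 ∧ j.1 = i.1 then ((Real.sqrt (cfun α β i.1) : ℝ) : ℂ)
  else if Even i.1 ∧ j.1 = i.1 + 1 then ((Real.sqrt (cfun α β i.1) : ℝ) : ℂ) * Complex.I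
  else 0

def rho (d : ℕ) (α β : ℝ) : Matrix (Fin d) (Fin d) ℂ := (Bmat d α β)ᴴ * Bmat d α β

lemma cfun_pair (α β : ℝ) {j : ℕ} (hj : j % 2 = 1) : cfun α β (j - 1) = cfun α β j := by
  unfold cfun
  by_cases h : j < 2
  · have h1 : j - 1 < 2 := by omega
    rw [if_pos h, if_pos h1]
  · have h1 : ¬ (j - 1 < 2) := by omega
    rw [if_neg h, if_neg h1]

lemma Bmat_diag (d : ℕ) (α β : ℝ) (i : Fin d) (h : i.1 % 2 = 0) :
    Bmat d α β i i = ((Real.sqrt (cfun α β i.1) : ℝ) : ℂ) := by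
  simp only [Bmat, Matrix.of_apply]
  rw [if_pos ⟨Nat.even_iff.mpr h, trivial⟩]

lemma Bmat_next (d : ℕ) (α β : ℝ) (i k : Fin d) (h : i.1 % 2 = 0) (hk : k.1 = i.1 + 1) :
    Bmat d α β i k = ((Real.sqrt (cfun α β i.1) : ℝ) : ℂ) * Complex.I := by
  simp only [Bmat, Matrix.of_apply]
  rw [if_neg (by omega : ¬ (Even i.1 ∧ k.1 = i.1)), if_pos ⟨Nat.even_iff.mpr h, hk⟩]

lemma Bmat_zero (d : ℕ) (α β : ℝ) (i k : Fin d)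
    (h : ¬ (i.1 % 2 = 0 ∧ (k.1 = i.1 ∨ k.1 = i.1 + 1))) :
    Bmat d α β i k = 0 := by
  simp only [Bmat, Matrix.of_apply]
  rw [if_neg, if_neg]
  · rintro ⟨he, hk⟩; exact h ⟨Nat.even_iff.mp he, Or.inr hk⟩
  · rintro ⟨he, hk⟩; exact h ⟨Nat.even_iff.mp he, Or.inl hk⟩

lemma keyA (x : ℝ) (hx : 0 ≤ x) :
    ((Real.sqrt x : ℝ) : ℂ) * -Complex.I * ((Real.sqrt x : ℝ) : ℂ) = -(((x : ℝ) : ℂ) * Complex.I) := by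
  have h : ((Real.sqrt x : ℝ) : ℂ) * ((Real.sqrt x : ℝ) : ℂ) = ((x : ℝ) : ℂ) := by
    rw [← Complex.ofReal_mul, Real.mul_self_sqrt hx]
  linear_combination (-Complex.I) * h

lemma keyB (x : ℝ) (hx : 0 ≤ x) :
    ((Real.sqrt x : ℝ) : ℂ) * -Complex.I * (((Real.sqrt x : ℝ) : ℂ) * Complex.I) = ((x : ℝ) : ℂ) := by
  have h : ((Real.sqrt x : ℝ) : ℂ) * ((Real.sqrt x : ℝ) : ℂ) = ((x : ℝ) : ℂ) := by
    rw [← Complex.ofReal_mul, Real.mul_self_sqrt hx]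
  linear_combination (-(Complex.I * Complex.I)) * h - ((x : ℝ) : ℂ) * Complex.I_mul_I

lemma rho_apply (d : ℕ) (α β : ℝ) (hα : 0 ≤ α) (hβ : 0 ≤ β) (j k : Fin d) :
    rho d α β j k =
      if j.1 = k.1 then ((cfun α β j.1 : ℝ) : ℂ)
      else if j.1 % 2 = 0 ∧ k.1 = j.1 + 1 then ((cfun α β j.1 : ℝ) : ℂ) * Complex.I
      else if k.1 % 2 = 0 ∧ j.1 = k.1 + 1 then -(((cfun α β k.1 : ℝ) : ℂ) * Complex.I)
      else 0 := by
  have hc : ∀ i : ℕ, 0 ≤ cfun α β i := by intro i; unfold cfun; split <;> assumption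
  have hsq : ∀ i : ℕ, ((Real.sqrt (cfun α β i) : ℝ) : ℂ) * ((Real.sqrt (cfun α β i) : ℝ) : ℂ)
      = ((cfun α β i : ℝ) : ℂ) := by
    intro i
    rw [← Complex.ofReal_mul, Real.mul_self_sqrt (hc i)]
  rw [rho, Matrix.mul_apply]
  by_cases hj : j.1 % 2 = 0
  · -- j even, contributing row i = j
    rw [Finset.sum_eq_single j]
    · rw [conjTranspose_apply, Bmat_diag d α β j hj]
      by_cases hk1 : j.1 = k.1
      · rw [show k = j from Fin.ext hk1.symm, Bmat_diag d α β j hj, if_pos rfl]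
        simp [hsq]
      · rw [if_neg hk1]
        by_cases hk2 : k.1 = j.1 + 1
        · rw [Bmat_next d α β j k hj hk2, if_pos ⟨hj, hk2⟩]
          simp only [star_trivial, RCLike.star_def, Complex.conj_ofReal]
          rw [← mul_assoc, hsq]
        · rw [Bmat_zero d α β j k (by tauto), if_neg (fun h => hk2 h.2),
            if_neg (by omega : ¬ (k.1 % 2 = 0 ∧ j.1 = k.1 + 1))]
          simp
    · intro i _ hij
      rw [conjTranspose_apply, Bmat_zero d α β i j, star_zero, zero_mul]
      rintro ⟨hie, (h | h)⟩
      · exact hij (Fin.ext h.symm)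
      · omega
    · intro h; exact absurd (Finset.mem_univ j) h
  · -- j odd, contributing row i0 = j - 1
    have hj1 : 1 ≤ j.1 := by omega
    have hlt : j.1 - 1 < d := by omega
    set i0 : Fin d := ⟨j.1 - 1, hlt⟩ with hi0
    have hval : i0.1 = j.1 - 1 := rfl
    have hi0e : i0.1 % 2 = 0 := by simp only [hi0]; omega
    have hji0 : j.1 = i0.1 + 1 := by simp only [hi0]; omega
    rw [Finset.sum_eq_single i0]
    · rw [conjTranspose_apply, Bmat_next d α β i0 j hi0e hji0]
      simp only [star_mul', Complex.star_def, Complex.conj_I, Complex.conj_ofReal]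
      by_cases hk1 : k.1 = i0.1
      · rw [show k = i0 from Fin.ext hk1, Bmat_diag d α β i0 hi0e]
        rw [if_neg (by omega : ¬ j.1 = i0.1), if_neg (by omega : ¬ (j.1 % 2 = 0 ∧ i0.1 = j.1 + 1)),
          if_pos ⟨hi0e, hji0⟩]
        rw [hval]
        exact keyA _ (hc _)
      · by_cases hk2 : k.1 = i0.1 + 1
        · rw [show k = j from Fin.ext (by omega), Bmat_next d α β i0 j hi0e hji0, if_pos rfl]
          rw [hval, ← cfun_pair α β (by omega : j.1 % 2 = 1)]
          exact keyB _ (hc _)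
        · rw [Bmat_zero d α β i0 k (by tauto)]
          rw [if_neg (by omega : ¬ j.1 = k.1), if_neg (by omega : ¬ (j.1 % 2 = 0 ∧ k.1 = j.1 + 1)),
            if_neg (by rintro ⟨h1, h2⟩; omega : ¬ (k.1 % 2 = 0 ∧ j.1 = k.1 + 1))]
          ring
    · intro i _ hii0
      rw [conjTranspose_apply, Bmat_zero d α β i j, star_zero, zero_mul]
      rintro ⟨hie, (h | h)⟩
      · omega
      · exact hii0 (Fin.ext (by omega))
    · intro h; exact absurd (Finset.mem_univ i0) h

lemma sum_cfun (α β : ℝ) (d : ℕ) (hd : 2 ≤ d) (g : ℝ → ℝ) :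
    ∑ i ∈ Finset.range d, g (cfun α β i) = 2 * g α + ((d : ℝ) - 2) * g β := by
  rw [Finset.range_eq_Ico, ← Finset.sum_Ico_consecutive _ (by omega : 0 ≤ 2) hd]
  have h1 : ∑ i ∈ Finset.Ico 0 2, g (cfun α β i) = 2 * g α := by
    rw [show Finset.Ico 0 2 = Finset.range 2 from (Finset.range_eq_Ico 2).symm]
    rw [Finset.sum_range_succ, Finset.sum_range_succ, Finset.sum_range_zero]
    simp [cfun]
    ring
  have h2 : ∑ i ∈ Finset.Ico 2 d, g (cfun α β i) = ((d : ℝ) - 2) * g β := by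
    have : ∀ i ∈ Finset.Ico 2 d, g (cfun α β i) = g β := by
      intro i hi
      rw [Finset.mem_Ico] at hi
      rw [cfun, if_neg (by omega)]
    rw [Finset.sum_congr rfl this, Finset.sum_const, Nat.card_Ico, nsmul_eq_mul]
    rw [Nat.cast_sub hd]
    norm_num
  rw [h1, h2]

lemma trace_rho (d : ℕ) (α β : ℝ) (hα : 0 ≤ α) (hβ : 0 ≤ β) (hd : 2 ≤ d) :
    (rho d α β).trace = (((2 * α + ((d : ℝ) - 2) * β) : ℝ) : ℂ) := by
  rw [Matrix.trace]
  have : ∀ j : Fin d, (rho d α β).diag j = ((cfun α β j.1 : ℝ) : ℂ) := by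
    intro j
    rw [Matrix.diag_apply, rho_apply d α β hα hβ, if_pos rfl]
  rw [Finset.sum_congr rfl (fun j _ => this j)]
  rw [Fin.sum_univ_eq_sum_range (fun i => ((cfun α β i : ℝ) : ℂ)) d]
  rw [show (∑ i ∈ Finset.range d, ((cfun α β i : ℝ) : ℂ))
      = (((∑ i ∈ Finset.range d, cfun α β i : ℝ)) : ℂ) by push_cast; rfl]
  rw [show ∑ i ∈ Finset.range d, cfun α β i = 2 * α + ((d : ℝ) - 2) * β from
    sum_cfun α β d hd id]

lemma rho_antisymm (d : ℕ) (α β : ℝ) (hα : 0 ≤ α) (hβ : 0 ≤ β) {j k : Fin d}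
    (h : j.1 ≠ k.1) : rho d α β k j = - rho d α β j k := by
  rw [rho_apply d α β hα hβ, rho_apply d α β hα hβ]
  split_ifs <;> first | omega | ring

lemma Rpart_apply (d : ℕ) (α β : ℝ) (hα : 0 ≤ α) (hβ : 0 ≤ β) (j k : Fin d) :
    Rpart d (rho d α β) j k = if j = k then (d : ℂ) * ((cfun α β j.1 : ℝ) : ℂ) else 0 := by
  rw [Rpart, Matrix.smul_apply, Matrix.add_apply, Matrix.transpose_apply, smul_eq_mul]
  by_cases h : j = k
  · subst h
    rw [if_pos rfl, rho_apply d α β hα hβ, if_pos rfl]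
    ring
  · rw [if_neg h, rho_antisymm d α β hα hβ (fun hh => h (Fin.ext hh))]
    ring

lemma Ipart_apply (d : ℕ) (α β : ℝ) (hα : 0 ≤ α) (hβ : 0 ≤ β) (j k : Fin d) :
    Ipart d (rho d α β) j k = if j = k then 0 else (d : ℂ) * rho d α β j k := by
  rw [Ipart, Matrix.smul_apply, Matrix.sub_apply, Matrix.transpose_apply, smul_eq_mul]
  by_cases h : j = k
  · subst h; rw [if_pos rfl]; ring
  · rw [if_neg h, rho_antisymm d α β hα hβ (fun hh => h (Fin.ext hh))]
    ring

lemma trace_RR (d : ℕ) (α β : ℝ) (hα : 0 ≤ α) (hβ : 0 ≤ β) (hd : 2 ≤ d) :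
    (Rpart d (rho d α β) * Rpart d (rho d α β)).trace
      = ((((d : ℝ) ^ 2 * (2 * α ^ 2 + ((d : ℝ) - 2) * β ^ 2)) : ℝ) : ℂ) := by
  rw [Matrix.trace]
  have hdiag : ∀ j : Fin d, (Rpart d (rho d α β) * Rpart d (rho d α β)).diag j
      = ((((d : ℝ) ^ 2 * (cfun α β j.1) ^ 2 : ℝ)) : ℂ) := by
    intro j
    rw [Matrix.diag_apply, Matrix.mul_apply]
    rw [Finset.sum_eq_single j]
    · rw [Rpart_apply d α β hα hβ, if_pos rfl]
      push_cast
      ring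
    · intro k _ hkj
      rw [Rpart_apply d α β hα hβ, if_neg (Ne.symm hkj), zero_mul]
    · intro h; exact absurd (Finset.mem_univ j) h
  rw [Finset.sum_congr rfl (fun j _ => hdiag j)]
  rw [Fin.sum_univ_eq_sum_range (fun i => ((((d : ℝ) ^ 2 * (cfun α β i) ^ 2 : ℝ)) : ℂ)) d]
  rw [show (∑ i ∈ Finset.range d, ((((d : ℝ) ^ 2 * (cfun α β i) ^ 2 : ℝ)) : ℂ))
      = (((∑ i ∈ Finset.range d, (d : ℝ) ^ 2 * (cfun α β i) ^ 2 : ℝ)) : ℂ) by push_cast; rfl]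
  rw [← Finset.mul_sum]
  rw [show ∑ i ∈ Finset.range d, (cfun α β i) ^ 2 = 2 * α ^ 2 + ((d : ℝ) - 2) * β ^ 2 from
    sum_cfun α β d hd (fun x => x ^ 2)]

lemma keyC (D x : ℂ) : (D * (x * Complex.I)) * (D * -(x * Complex.I)) = D ^ 2 * x ^ 2 := by
  linear_combination (-(D ^ 2 * x ^ 2)) * Complex.I_mul_I

lemma keyC' (D x : ℂ) : (D * -(x * Complex.I)) * (D * (x * Complex.I)) = D ^ 2 * x ^ 2 := by
  linear_combination (-(D ^ 2 * x ^ 2)) * Complex.I_mul_I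

lemma trace_II (d : ℕ) (α β : ℝ) (hα : 0 ≤ α) (hβ : 0 ≤ β) (hd : 2 ≤ d) (hde : d % 2 = 0) :
    (Ipart d (rho d α β) * Ipart d (rho d α β)).trace
      = ((((d : ℝ) ^ 2 * (2 * α ^ 2 + ((d : ℝ) - 2) * β ^ 2)) : ℝ) : ℂ) := by
  rw [Matrix.trace]
  have hdiag : ∀ j : Fin d, (Ipart d (rho d α β) * Ipart d (rho d α β)).diag j
      = ((((d : ℝ) ^ 2 * (cfun α β j.1) ^ 2 : ℝ)) : ℂ) := by
    intro j
    rw [Matrix.diag_apply, Matrix.mul_apply]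
    by_cases hj : j.1 % 2 = 0
    · have hlt : j.1 + 1 < d := by omega
      set k0 : Fin d := ⟨j.1 + 1, hlt⟩ with hk0def
      have hk0 : k0.1 = j.1 + 1 := rfl
      have hjk0 : j ≠ k0 := fun h => by
        have := congrArg Fin.val h; omega
      rw [Finset.sum_eq_single k0]
      · rw [Ipart_apply d α β hα hβ, Ipart_apply d α β hα hβ, if_neg hjk0,
          if_neg (Ne.symm hjk0), rho_apply d α β hα hβ j k0, rho_apply d α β hα hβ k0 j]
        rw [if_neg (by omega : ¬ j.1 = k0.1), if_pos ⟨hj, hk0⟩,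
          if_neg (by omega : ¬ k0.1 = j.1), if_neg (by omega : ¬ (k0.1 % 2 = 0 ∧ j.1 = k0.1 + 1)),
          if_pos ⟨hj, hk0⟩]
        rw [keyC]
        push_cast
        ring
      · intro k _ hk
        by_cases hkj : k = j
        · subst hkj
          rw [Ipart_apply d α β hα hβ, if_pos rfl, zero_mul]
        · rw [Ipart_apply d α β hα hβ k j, if_neg hkj, rho_apply d α β hα hβ k j]
          have h1 : ¬ k.1 = j.1 := fun h => hkj (Fin.ext h)
          have h2 : ¬ (k.1 % 2 = 0 ∧ j.1 = k.1 + 1) := by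
            rintro ⟨hk2, hj2⟩; omega
          have h3 : ¬ (j.1 % 2 = 0 ∧ k.1 = j.1 + 1) := by
            rintro ⟨_, hk2⟩; exact hk (Fin.ext (hk2.trans hk0.symm))
          rw [if_neg h1, if_neg h2, if_neg h3, mul_zero, mul_zero]
      · intro h; exact absurd (Finset.mem_univ k0) h
    · have hlt : j.1 - 1 < d := by omega
      have hj1 : 1 ≤ j.1 := by omega
      set k0 : Fin d := ⟨j.1 - 1, hlt⟩ with hk0def
      have hk0 : k0.1 = j.1 - 1 := rfl
      have hk0e : k0.1 % 2 = 0 := by omega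
      have hjk0v : j.1 = k0.1 + 1 := by omega
      have hjk0 : j ≠ k0 := fun h => by
        have := congrArg Fin.val h; omega
      rw [Finset.sum_eq_single k0]
      · rw [Ipart_apply d α β hα hβ, Ipart_apply d α β hα hβ, if_neg hjk0,
          if_neg (Ne.symm hjk0), rho_apply d α β hα hβ j k0, rho_apply d α β hα hβ k0 j]
        rw [if_neg (by omega : ¬ j.1 = k0.1), if_neg (by omega : ¬ (j.1 % 2 = 0 ∧ k0.1 = j.1 + 1)),
          if_pos ⟨hk0e, hjk0v⟩,
          if_neg (by omega : ¬ k0.1 = j.1), if_pos ⟨hk0e, hjk0v⟩]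
        rw [keyC']
        have hcp : cfun α β k0.1 = cfun α β j.1 := by
          rw [hk0]; exact cfun_pair α β (by omega)
        rw [hcp]
        push_cast
        ring
      · intro k _ hk
        by_cases hkj : k = j
        · subst hkj
          rw [Ipart_apply d α β hα hβ, if_pos rfl, zero_mul]
        · rw [Ipart_apply d α β hα hβ k j, if_neg hkj, rho_apply d α β hα hβ k j]
          have h1 : ¬ k.1 = j.1 := fun h => hkj (Fin.ext h)
          have h2 : ¬ (k.1 % 2 = 0 ∧ j.1 = k.1 + 1) := by
            rintro ⟨hk2, hj2⟩
            exact hk (Fin.ext (by omega))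
          have h3 : ¬ (j.1 % 2 = 0 ∧ k.1 = j.1 + 1) := by
            rintro ⟨hj2, _⟩; exact hj hj2
          rw [if_neg h1, if_neg h2, if_neg h3, mul_zero, mul_zero]
      · intro h; exact absurd (Finset.mem_univ k0) h
  rw [Finset.sum_congr rfl (fun j _ => hdiag j)]
  rw [Fin.sum_univ_eq_sum_range (fun i => ((((d : ℝ) ^ 2 * (cfun α β i) ^ 2 : ℝ)) : ℂ)) d]
  rw [show (∑ i ∈ Finset.range d, ((((d : ℝ) ^ 2 * (cfun α β i) ^ 2 : ℝ)) : ℂ))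
      = (((∑ i ∈ Finset.range d, (d : ℝ) ^ 2 * (cfun α β i) ^ 2 : ℝ)) : ℂ) by push_cast; rfl]
  rw [← Finset.mul_sum]
  rw [show ∑ i ∈ Finset.range d, (cfun α β i) ^ 2 = 2 * α ^ 2 + ((d : ℝ) - 2) * β ^ 2 from
    sum_cfun α β d hd (fun x => x ^ 2)]

theorem quadratic_bound_saturated_even (d : ℕ) (hd : 2 ≤ d) (hdeven : Even d)
    (r : ℝ) (hr0 : 0 ≤ r) (hr1 : r ≤ Real.sqrt (((d : ℝ) - 2) / 2)) :
    ∃ ρ : Matrix (Fin d) (Fin d) ℂ, IsDensityMatrix ρ ∧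
      SR d ρ = r ∧ SI d ρ ^ 2 = 1 + r ^ 2 := by
  have hde : d % 2 = 0 := Nat.even_iff.mp hdeven
  have hd2 : (2 : ℝ) ≤ (d : ℝ) := by exact_mod_cast hd
  have hd0 : (0 : ℝ) < (d : ℝ) := by linarith
  set s : ℝ := Real.sqrt (((d : ℝ) - 2) / 2) with hs_def
  have hs0 : 0 ≤ s := Real.sqrt_nonneg _
  have hs2 : s ^ 2 = ((d : ℝ) - 2) / 2 := Real.sq_sqrt (by linarith)
  set α : ℝ := (1 + r * s) / d with hα_def
  set β : ℝ := (s - r) / (d * s) with hβ_def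
  have hα : 0 ≤ α := div_nonneg (by nlinarith) (le_of_lt hd0)
  have hβ : 0 ≤ β := div_nonneg (by linarith) (by positivity)
  have hds : (d : ℝ) = 2 * s ^ 2 + 2 := by rw [hs2]; ring
  have hS1 : 2 * α + ((d : ℝ) - 2) * β = 1 := by
    by_cases hs : s = 0
    · have hdr : (d : ℝ) = 2 := by rw [hds, hs]; ring
      have hr : r = 0 := le_antisymm (hs ▸ hr1) hr0
      rw [hα_def, hβ_def, hdr, hs, hr]
      norm_num
    · rw [hα_def, hβ_def, hds]
      have h1 : 2 * s ^ 2 + 2 ≠ 0 := by positivity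
      field_simp
      ring
  have hS2 : 2 * α ^ 2 + ((d : ℝ) - 2) * β ^ 2 = (1 + r ^ 2) / d := by
    by_cases hs : s = 0
    · have hdr : (d : ℝ) = 2 := by rw [hds, hs]; ring
      have hr : r = 0 := le_antisymm (hs ▸ hr1) hr0
      rw [hα_def, hβ_def, hdr, hs, hr]
      norm_num
    · rw [hα_def, hβ_def, hds]
      have h1 : 2 * s ^ 2 + 2 ≠ 0 := by positivity
      field_simp
      ring
  refine ⟨rho d α β, ⟨?_, ?_⟩, ?_, ?_⟩
  · exact Matrix.posSemidef_conjTranspose_mul_self _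
  · rw [trace_rho d α β hα hβ hd, hS1]
    norm_num
  · rw [SR, trace_RR d α β hα hβ hd, Complex.ofReal_re]
    have : (d : ℝ) ^ 2 * (2 * α ^ 2 + ((d : ℝ) - 2) * β ^ 2) / d - 1 = r ^ 2 := by
      rw [hS2]
      field_simp
      ring
    rw [this, Real.sqrt_sq hr0]
  · rw [SI, trace_II d α β hα hβ hd hde, Complex.ofReal_re]
    have : (d : ℝ) ^ 2 * (2 * α ^ 2 + ((d : ℝ) - 2) * β ^ 2) / d = 1 + r ^ 2 := by
      rw [hS2]
      field_simp
    rw [this, Real.sq_sqrt (by positivity)]
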